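/- arXiv:2202.01832 — 4 statements merged into one kernel-verified Lean document; each statement's English description precedes it below -/
import Mathlib

section
/- For regularization parameters c ≥ c' ≥ 0, the relative domain transferability loss is monotone: ℓ_T(f_c) − ℓ_S(f_c) ≥ ℓ_T(f_{c'}) − ℓ_S(f_{c'}), where for each parameter t ≥ 0 the constrained minimizer is f_t := min{1, t/‖y_S‖_D}·y_S. -/
open MeasureTheory

/-- With `‖f‖_D := ∫ x, ‖f x‖ ∂D`, source loss `ℓ_S f := ‖f - yS‖_D`, target
loss `ℓ_T f := ‖f - yT‖_D`, and constrained minimizer `f_t := min {1, t/‖yS‖_D} • yS` for each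
regularization parameter `t ≥ 0`: if `c ≥ c' ≥ 0`, then
`ℓ_T(f_c) − ℓ_S(f_c) ≥ ℓ_T(f_{c'}) − ℓ_S(f_{c'})`. -/
theorem statement1 {X : Type*} [MeasurableSpace X] {E : Type*}
    [NormedAddCommGroup E] [NormedSpace ℝ E]
    (D : Measure X) [IsProbabilityMeasure D]
    (yS yT : X → E) (hyS : Integrable yS D) (hyT : Integrable yT D)
    (hySpos : 0 < ∫ x, ‖yS x‖ ∂D)
    (ft : ℝ → X → E)
    (hft : ∀ t : ℝ, ft t = fun x => (min 1 (t / ∫ x, ‖yS x‖ ∂D)) • yS x)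
    (c c' : ℝ) (hc' : 0 ≤ c') (hcc' : c' ≤ c) :
    (∫ x, ‖ft c' x - yT x‖ ∂D) - (∫ x, ‖ft c' x - yS x‖ ∂D) ≤
      (∫ x, ‖ft c x - yT x‖ ∂D) - (∫ x, ‖ft c x - yS x‖ ∂D) := by
  set N := ∫ x, ‖yS x‖ ∂D with hNdef
  set a := min 1 (c' / N) with hadef
  set b := min 1 (c / N) with hbdef
  have hab : a ≤ b := min_le_min le_rfl (by
    gcongr)
  have ha1 : a ≤ 1 := min_le_left _ _
  have hb1 : b ≤ 1 := min_le_left _ _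
  rw [hft c, hft c']
  have hsrc : ∀ t : ℝ, t ≤ 1 →
      (∫ x, ‖t • yS x - yS x‖ ∂D) = (1 - t) * N := by
    intro t ht
    have hpt : ∀ x, ‖t • yS x - yS x‖ = (1 - t) * ‖yS x‖ := by
      intro x
      have h1 : t • yS x - yS x = (t - 1) • yS x := by
        rw [sub_smul, one_smul]
      rw [h1, norm_smul, Real.norm_eq_abs, abs_of_nonpos (by linarith : t - 1 ≤ 0)]
      ring
    simp_rw [hpt]
    rw [integral_const_mul]
  have hkey : (∫ x, ‖a • yS x - yT x‖ ∂D) ≤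
      (∫ x, ‖b • yS x - yT x‖ ∂D) + (b - a) * N := by
    have hInt1 : Integrable (fun x => ‖a • yS x - yT x‖) D :=
      ((hyS.smul a).sub hyT).norm
    have hInt2 : Integrable (fun x => ‖b • yS x - yT x‖) D :=
      ((hyS.smul b).sub hyT).norm
    have hInt3 : Integrable (fun x => (b - a) * ‖yS x‖) D :=
      hyS.norm.const_mul (b - a)
    calc (∫ x, ‖a • yS x - yT x‖ ∂D)
        ≤ ∫ x, (‖b • yS x - yT x‖ + (b - a) * ‖yS x‖) ∂D := by
          apply integral_mono hInt1 (hInt2.add hInt3)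
          intro x
          have h1 : a • yS x - yT x = (b • yS x - yT x) + ((a - b) • yS x) := by
            rw [sub_smul]; abel
          calc ‖a • yS x - yT x‖ ≤ ‖b • yS x - yT x‖ + ‖(a - b) • yS x‖ := by
                rw [h1]; exact norm_add_le _ _
            _ = ‖b • yS x - yT x‖ + (b - a) * ‖yS x‖ := by
                rw [norm_smul, Real.norm_eq_abs, abs_of_nonpos (by linarith : a - b ≤ 0)]
                ring_nf
      _ = (∫ x, ‖b • yS x - yT x‖ ∂D) + (b - a) * N := by
          rw [integral_add hInt2 hInt3, integral_const_mul]
  simp only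
  rw [hsrc a ha1, hsrc b hb1]
  linarith
end

section
/- Let r > 0 and let S_r^{d−1} := {y ∈ ℝ^d : ‖y‖₂ = r} be the sphere of radius r. If a function h : S_r^{d−1} → ℝ^d satisfies ⟨h(y), y⟩ < 0 for all y ∈ S_r^{d−1}, then the zero vector lies in the convex hull of the image: 0 ∈ conv({h(y) : y ∈ S_r^{d−1}}). -/
open scoped RealInnerProductSpace

/-- Weak separation of a point from a convex hull in a finite-dimensional real inner
product space: if `0 ∉ conv A` then there is a unit vector `v` with `⟪v, a⟫ ≥ 0` on `A`. -/
lemma aux_separate {E : Type*} [NormedAddCommGroup E] [InnerProductSpace ℝ E]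
    [FiniteDimensional ℝ E] [Nontrivial E] {A : Set E}
    (h0 : (0 : E) ∉ convexHull ℝ A) :
    ∃ v : E, ‖v‖ = 1 ∧ ∀ a ∈ A, 0 ≤ ⟪v, a⟫ := by
  set s : Set E := Metric.sphere (0 : E) 1 with hs
  have hscomp : IsCompact s := isCompact_sphere 0 1
  set t : A → Set E := fun a => {v : E | 0 ≤ ⟪v, (a : E)⟫} with ht
  have htc : ∀ a : A, IsClosed (t a) := by
    intro a
    exact isClosed_le continuous_const (continuous_id.inner continuous_const)
  have hfin : ∀ u : Finset A, (s ∩ ⋂ a ∈ u, t a).Nonempty := by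
    intro u
    rcases u.eq_empty_or_nonempty with rfl | ⟨a₀, ha₀⟩
    · simp only [Finset.notMem_empty, Set.iInter_of_empty, Set.iInter_univ, Set.inter_univ]
      exact NormedSpace.sphere_nonempty.2 zero_le_one
    · -- separate 0 from the convex hull of the finite set `u`
      set F : Set E := Subtype.val '' (↑u : Set A) with hF
      have hFfin : F.Finite := (u.finite_toSet.image _)
      have hFA : F ⊆ A := by
        rintro x ⟨a, _, rfl⟩; exact a.2
      have h0F : (0 : E) ∉ convexHull ℝ F :=
        fun hx => h0 (convexHull_mono hFA hx)
      obtain ⟨f, c, hfc, hc0⟩ :=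
        geometric_hahn_banach_closed_point (convex_convexHull ℝ F)
          (hFfin.isClosed_convexHull ℝ) h0F
      simp only [map_zero] at hc0
      set w : E := (InnerProductSpace.toDual ℝ E).symm f with hw
      have hwf : ∀ x : E, ⟪w, x⟫ = f x := fun x => InnerProductSpace.toDual_symm_apply
      have hneg : ∀ a ∈ u, ⟪w, (a : E)⟫ < 0 := by
        intro a ha
        have : (a : E) ∈ convexHull ℝ F :=
          subset_convexHull ℝ F ⟨a, by simpa using ha, rfl⟩
        have := hfc _ this
        rw [hwf]; linarith
      have hwne : w ≠ 0 := by
        intro hw0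
        have := hneg a₀ ha₀
        rw [hw0, inner_zero_left] at this
        exact lt_irrefl 0 this
      have hnw : (0:ℝ) < ‖w‖ := norm_pos_iff.2 hwne
      refine ⟨-(‖w‖⁻¹ • w), ?_, ?_⟩
      · rw [hs, mem_sphere_zero_iff_norm, norm_neg, norm_smul, norm_inv, norm_norm]
        field_simp
      · simp only [Set.mem_iInter₂]
        intro a ha
        have hlt := hneg a ha
        have heq : ⟪-(‖w‖⁻¹ • w), (a : E)⟫ = -(‖w‖⁻¹ * ⟪w, (a : E)⟫) := by
          rw [inner_neg_left, real_inner_smul_left]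
        show (0:ℝ) ≤ ⟪-(‖w‖⁻¹ • w), (a : E)⟫
        rw [heq]
        have : ‖w‖⁻¹ * ⟪w, (a : E)⟫ ≤ 0 :=
          mul_nonpos_of_nonneg_of_nonpos (inv_nonneg.2 hnw.le) hlt.le
        linarith
  obtain ⟨v, hvs, hvt⟩ := hscomp.inter_iInter_nonempty t htc hfin
  refine ⟨v, by rwa [hs, mem_sphere_zero_iff_norm] at hvs, ?_⟩
  intro a ha
  have := Set.mem_iInter.1 hvt ⟨a, ha⟩
  exact this

/-- Let `S_r^{d−1} = {y ∈ ℝ^d : ‖y‖₂ = r}` with `r > 0` (and `d ≥ 1` so that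
the sphere is nonempty).  If `h : ℝ^d → ℝ^d` satisfies `⟨h(y), y⟩ < 0` for every `y` on the
sphere, then `0` lies in the convex hull of the image `{h(y) : ‖y‖₂ = r}`. -/
theorem statement8 {d : ℕ} (hd : 0 < d) (r : ℝ) (hr : 0 < r)
    (h : EuclideanSpace ℝ (Fin d) → EuclideanSpace ℝ (Fin d))
    (hh : ∀ y : EuclideanSpace ℝ (Fin d), ‖y‖ = r → ⟪h y, y⟫ < 0) :
    (0 : EuclideanSpace ℝ (Fin d)) ∈
      convexHull ℝ (h '' {y : EuclideanSpace ℝ (Fin d) | ‖y‖ = r}) := by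
  haveI : Nonempty (Fin d) := ⟨⟨0, hd⟩⟩
  haveI : Nontrivial (EuclideanSpace ℝ (Fin d)) := inferInstance
  by_contra h0
  obtain ⟨v, hv1, hv⟩ := aux_separate h0
  set y : EuclideanSpace ℝ (Fin d) := r • v with hy
  have hyr : ‖y‖ = r := by
    rw [hy, norm_smul, hv1, Real.norm_eq_abs, abs_of_pos hr, mul_one]
  have h1 : ⟪h y, y⟫ < 0 := hh y hyr
  have h2 : (0:ℝ) ≤ ⟪v, h y⟫ := hv _ ⟨y, hyr, rfl⟩
  have h3 : ⟪h y, y⟫ = r * ⟪v, h y⟫ := by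
    rw [hy, real_inner_smul_right, real_inner_comm]
  nlinarith
end

section
/- Under feature-level data augmentation with affine transformation parameters (W★, b★) satisfying E[W★] = I_d, E[b★] = 0, and W★ independent of b★ (with finite second moments), the augmented loss-averaging objective equals the unaugmented objective plus a regularizer: (1/n) Σ_{i=1}^{n} E_{W★,b★}[ (⟨W_g, W★ f(xᵢ) + b★⟩ − yᵢ)² ] = (1/n) Σ_{i=1}^{n} (⟨W_g, f(xᵢ)⟩ − yᵢ)² + Ω, where Ω = (1/n) Σ_{i=1}^{n} E_{W★}[ (f(xᵢ)ᵀ (W★ − I_d) W_g)² ] + E_{b★}[ (b★ᵀ W_g)² ]. -/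
open MeasureTheory

/-- **feature-level data augmentation as regularization.**
The feature extractor is `f : ℝ^m → ℝ^d`, the fine-tuning function is the linear map
`z ↦ ⟨W_g, z⟩`, and the loss is the squared loss.  Feature-level data augmentation replaces the
feature `f(x)` by `W★ f(x) + b★`, where `(W★, b★)` are random (modeled as measurable functions
on a probability space `(Ω, μ)`) with finite second moments, satisfying `E[W★] = I_d`,
`E[b★] = 0`, and `W★` independent of `b★`.  Then the loss-averaging augmented objective equals
the unaugmented objective plus the regularizer
`Ω = (1/n) Σᵢ E_{W★}[(⟨W_g, (W★ − I_d) f(xᵢ)⟩)²] + E_{b★}[(⟨W_g, b★⟩)²]`. -/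
theorem statement12 {m d n : ℕ} (hn : 0 < n)
    (f : (Fin m → ℝ) → Fin d → ℝ) (Wg : Fin d → ℝ)
    (x : Fin n → Fin m → ℝ) (y : Fin n → ℝ)
    {Ω : Type*} [MeasurableSpace Ω] (μ : Measure Ω) [IsProbabilityMeasure μ]
    (W : Ω → Fin d → Fin d → ℝ) (b : Ω → Fin d → ℝ)
    (hWmeas : Measurable W) (hbmeas : Measurable b)
    (hW2 : ∀ k j, MemLp (fun ω => W ω k j) 2 μ)
    (hb2 : ∀ k, MemLp (fun ω => b ω k) 2 μ)
    (hWmean : ∀ k j, (∫ ω, W ω k j ∂μ) = if k = j then 1 else 0)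
    (hbmean : ∀ k, (∫ ω, b ω k ∂μ) = 0)
    (hindep : ProbabilityTheory.IndepFun W b μ) :
    (1 / (n : ℝ)) * ∑ i : Fin n,
        ∫ ω, (∑ k : Fin d, Wg k * ((∑ j : Fin d, W ω k j * f (x i) j) + b ω k) - y i) ^ 2 ∂μ =
      (1 / (n : ℝ)) * ∑ i : Fin n, (∑ k : Fin d, Wg k * f (x i) k - y i) ^ 2 +
        ((1 / (n : ℝ)) * ∑ i : Fin n,
            (∫ ω, (∑ k : Fin d, Wg k *
              ∑ j : Fin d, (W ω k j - if k = j then 1 else 0) * f (x i) j) ^ 2 ∂μ) +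
          ∫ ω, (∑ k : Fin d, Wg k * b ω k) ^ 2 ∂μ) := by
  have hWint : ∀ k j, Integrable (fun ω => W ω k j) μ :=
    fun k j => (hW2 k j).integrable one_le_two
  have hbint : ∀ k, Integrable (fun ω => b ω k) μ :=
    fun k => (hb2 k).integrable one_le_two
  -- the bias part
  set B : Ω → ℝ := fun ω => ∑ k : Fin d, Wg k * b ω k with hBdef
  have hB2 : MemLp B 2 μ :=
    memLp_finset_sum _ fun k _ => (hb2 k).const_mul _
  have hBint : Integrable B μ := hB2.integrable one_le_two
  have hEB : (∫ ω, B ω ∂μ) = 0 := by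
    simp only [hBdef]
    rw [integral_finset_sum _ fun k _ => (hbint k).const_mul _]
    simp [integral_const_mul, hbmean]
  have key : ∀ i : Fin n,
      (∫ ω, (∑ k : Fin d, Wg k * ((∑ j : Fin d, W ω k j * f (x i) j) + b ω k) - y i) ^ 2 ∂μ) =
      (∑ k : Fin d, Wg k * f (x i) k - y i) ^ 2 +
      ((∫ ω, (∑ k : Fin d, Wg k *
          ∑ j : Fin d, (W ω k j - if k = j then 1 else 0) * f (x i) j) ^ 2 ∂μ) +
        ∫ ω, B ω ^ 2 ∂μ) := by
    intro i
    set v : Fin d → ℝ := f (x i) with hv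
    set c : ℝ := ∑ k : Fin d, Wg k * v k - y i with hc
    set A : Ω → ℝ :=
      fun ω => ∑ k : Fin d, Wg k * ∑ j : Fin d, (W ω k j - if k = j then 1 else 0) * v j
      with hAdef
    have hterm2 : ∀ k j : Fin d,
        MemLp (fun ω => (W ω k j - if k = j then 1 else 0) * v j) 2 μ := by
      intro k j
      have h := ((hW2 k j).sub (memLp_const (if k = j then (1:ℝ) else 0))).const_mul (v j)
      simpa [Pi.sub_apply, mul_comm] using h
    have hA2 : MemLp A 2 μ :=
      memLp_finset_sum _ fun k _ =>
        (memLp_finset_sum _ fun j _ => hterm2 k j).const_mul _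
    have hAint : Integrable A μ := hA2.integrable one_le_two
    have htermint : ∀ k j : Fin d,
        Integrable (fun ω => (W ω k j - if k = j then 1 else 0) * v j) μ :=
      fun k j => (hterm2 k j).integrable one_le_two
    have hEA : (∫ ω, A ω ∂μ) = 0 := by
      simp only [hAdef]
      rw [integral_finset_sum _ fun k _ =>
        (integrable_finset_sum _ fun j _ => htermint k j).const_mul _]
      have h1 : ∀ k j : Fin d,
          (∫ ω, (W ω k j - if k = j then 1 else 0) * v j ∂μ) = 0 := by
        intro k j
        rw [integral_mul_const, integral_sub (hWint k j) (integrable_const _), hWmean,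
          integral_const]
        simp
      refine Finset.sum_eq_zero fun k _ => ?_
      rw [integral_const_mul, integral_finset_sum _ fun j _ => htermint k j]
      simp [h1]
    have hφ : Measurable (fun M : Fin d → Fin d → ℝ =>
        ∑ k : Fin d, Wg k * ∑ j : Fin d, (M k j - if k = j then 1 else 0) * v j) :=
      Finset.measurable_sum _ fun k _ => ((Finset.measurable_sum _ fun j _ =>
        (((measurable_pi_apply j).comp (measurable_pi_apply k)).sub
          measurable_const).mul_const _).const_mul _)
    have hψ : Measurable (fun z : Fin d → ℝ => ∑ k : Fin d, Wg k * z k) :=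
      Finset.measurable_sum _ fun k _ => (measurable_pi_apply k).const_mul _
    have hindAB : ProbabilityTheory.IndepFun A B μ := hindep.comp hφ hψ
    have iA2 : Integrable (fun ω => A ω ^ 2) μ := hA2.integrable_sq
    have iB2 : Integrable (fun ω => B ω ^ 2) μ := hB2.integrable_sq
    have iAB : Integrable (fun ω => A ω * B ω) μ := hindAB.integrable_mul hAint hBint
    have hEAB : (∫ ω, A ω * B ω ∂μ) = 0 := by
      rw [hindAB.integral_fun_mul_eq_mul_integral hAint.aestronglyMeasurable hBint.aestronglyMeasurable, hEA,
        zero_mul]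
    have hpt : ∀ ω : Ω,
        (∑ k : Fin d, Wg k * ((∑ j : Fin d, W ω k j * v j) + b ω k) - y i)
          = A ω + B ω + c := by
      intro ω
      rw [hAdef, hBdef, hc]
      simp only [sub_mul, Finset.sum_sub_distrib, mul_sub, mul_add, Finset.sum_add_distrib,
        ite_mul, one_mul, zero_mul, Finset.sum_ite_eq, Finset.mem_univ, if_true]
      ring
    have hpt2 : ∀ ω : Ω,
        (∑ k : Fin d, Wg k * ((∑ j : Fin d, W ω k j * v j) + b ω k) - y i) ^ 2
          = (A ω ^ 2 + B ω ^ 2) + (2 * (A ω * B ω) + ((2 * c) * A ω + (2 * c) * B ω))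
            + c ^ 2 := by
      intro ω; rw [hpt ω]; ring
    calc (∫ ω, (∑ k : Fin d, Wg k * ((∑ j : Fin d, W ω k j * v j) + b ω k) - y i) ^ 2 ∂μ)
        = ∫ ω, ((A ω ^ 2 + B ω ^ 2)
            + (2 * (A ω * B ω) + ((2 * c) * A ω + (2 * c) * B ω)) + c ^ 2) ∂μ := by
          exact integral_congr_ae (Filter.Eventually.of_forall hpt2)
      _ = ((∫ ω, A ω ^ 2 ∂μ) + ∫ ω, B ω ^ 2 ∂μ)
            + (2 * (∫ ω, A ω * B ω ∂μ)
              + ((2 * c) * (∫ ω, A ω ∂μ) + (2 * c) * ∫ ω, B ω ∂μ)) + c ^ 2 := by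
          have i2AB : Integrable (fun ω => 2 * (A ω * B ω)) μ := iAB.const_mul 2
          have icA : Integrable (fun ω => (2 * c) * A ω) μ := hAint.const_mul _
          have icB : Integrable (fun ω => (2 * c) * B ω) μ := hBint.const_mul _
          have sC : Integrable (fun ω => (2 * c) * A ω + (2 * c) * B ω) μ := icA.add icB
          have s1 : Integrable (fun ω => A ω ^ 2 + B ω ^ 2) μ := iA2.add iB2
          have s2 : Integrable
              (fun ω => 2 * (A ω * B ω) + ((2 * c) * A ω + (2 * c) * B ω)) μ := i2AB.add sC
          have s3 : Integrable (fun ω => (A ω ^ 2 + B ω ^ 2)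
              + (2 * (A ω * B ω) + ((2 * c) * A ω + (2 * c) * B ω))) μ := s1.add s2
          rw [integral_add s3 (integrable_const _), integral_add s1 s2,
            integral_add iA2 iB2, integral_add i2AB sC, integral_add icA icB,
            integral_const_mul, integral_const_mul, integral_const_mul, integral_const]
          simp
      _ = c ^ 2 + ((∫ ω, A ω ^ 2 ∂μ) + ∫ ω, B ω ^ 2 ∂μ) := by
          rw [hEAB, hEA, hEB]; ring
  have hn' : (n : ℝ) ≠ 0 := Nat.cast_ne_zero.mpr hn.ne'
  simp only [key]
  rw [Finset.sum_add_distrib, Finset.sum_add_distrib, Finset.sum_const, Finset.card_univ,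
    Fintype.card_fin, mul_add, mul_add, nsmul_eq_mul]
  rw [one_div, inv_mul_cancel_left₀ hn']
end

section
/- Let ℓ : ℝ^d × ℝ^d → [0, ∞) be differentiable and strictly convex in its first argument with ℓ(y, y) = 0 for all y ∈ ℝ^d. Then for every r > 0 there exist finitely many points y₁, …, yₙ with ‖yᵢ‖₂ = r and weights c₁, …, cₙ > 0 with Σᵢ cᵢ = 1 such that Σᵢ cᵢ ∇₁ℓ(0, yᵢ) = 0, and consequently the strictly convex function h(u) := Σᵢ cᵢ ℓ(u, yᵢ) attains its unique global minimum over ℝ^d at u = 0. -/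
open scoped RealInnerProductSpace
open Filter Topology

section AuxLemmas
variable {E : Type*} [NormedAddCommGroup E] [InnerProductSpace ℝ E]

/-- Gradient inequality for convex differentiable functions. -/
lemma aux_grad_ineq [CompleteSpace E] {f : E → ℝ} (hf : ConvexOn ℝ Set.univ f)
    (hd : Differentiable ℝ f) (x z : E) :
    ⟪gradient f x, z - x⟫ ≤ f z - f x := by
  set φ : ℝ → ℝ := fun t => f (x + t • (z - x)) with hφ
  have hline : HasDerivAt (fun t : ℝ => x + t • (z - x)) (z - x) 0 := by
    simpa using ((hasDerivAt_id (0:ℝ)).smul_const (z - x)).const_add x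
  have hderiv : HasDerivAt φ (fderiv ℝ f (x + (0:ℝ) • (z - x)) (z - x)) 0 :=
    (hd _).hasFDerivAt.comp_hasDerivAt 0 hline
  rw [show x + (0:ℝ) • (z - x) = x by simp] at hderiv
  have hgrad : fderiv ℝ f x (z - x) = ⟪gradient f x, z - x⟫ := by
    rw [(hd x).hasGradientAt.hasFDerivAt.fderiv, InnerProductSpace.toDual_apply_apply]
  rw [hgrad] at hderiv
  have hslope : Tendsto (slope φ 0) (𝓝[>] 0) (𝓝 ⟪gradient f x, z - x⟫) :=
    (hasDerivAt_iff_tendsto_slope.mp hderiv).mono_left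
      (nhdsWithin_mono 0 (fun t ht => ne_of_gt ht))
  refine le_of_tendsto hslope ?_
  filter_upwards [Ioo_mem_nhdsGT_of_mem (Set.left_mem_Ico.mpr one_pos)] with t ht
  have hconv := hf.2 (Set.mem_univ x) (Set.mem_univ z)
    (by linarith [ht.2] : (0:ℝ) ≤ 1 - t) ht.1.le (by ring)
  have hpt : x + t • (z - x) = (1 - t) • x + t • z := by module
  have hφt : φ t ≤ (1 - t) * f x + t * f z := by rw [hφ]; simp only; rw [hpt]; exact hconv
  have hφ0 : φ 0 = f x := by simp [hφ]
  rw [slope_def_field]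
  rw [div_le_iff₀ (by simpa using ht.1)]
  nlinarith [ht.1]

lemma aux_sep [FiniteDimensional ℝ E] {C : Set E} (hC : Convex ℝ C) (hne : C.Nonempty)
    (h0 : (0:E) ∉ C) : ∃ w : E, w ≠ 0 ∧ ∀ s ∈ C, 0 ≤ ⟪w, s⟫ := by
  by_cases hint : (interior C).Nonempty
  · obtain ⟨f, hf⟩ := geometric_hahn_banach_open_point hC.interior isOpen_interior
      (fun h => h0 (interior_subset h))
    rw [map_zero] at hf
    obtain ⟨a, ha⟩ := hint
    have hfa : f a < 0 := hf a ha
    have hfC : ∀ s ∈ C, f s ≤ 0 := by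
      intro s hs
      have key : ∀ t : ℝ, t ∈ Set.Ioo (0:ℝ) 1 → t * f a + (1 - t) * f s < 0 := by
        intro t ht
        have hmem : t • a + (1 - t) • s ∈ interior C :=
          hC.combo_interior_self_subset_interior ht.1 (by linarith [ht.2]) (by ring)
            (Set.add_mem_add (Set.smul_mem_smul_set ha) (Set.smul_mem_smul_set hs))
        have := hf _ hmem
        simpa [map_add, map_smul, smul_eq_mul] using this
      have htend : Tendsto (fun t : ℝ => t * f a + (1 - t) * f s) (𝓝[>] 0) (𝓝 (f s)) := by
        have : Tendsto (fun t : ℝ => t * f a + (1 - t) * f s) (𝓝 0)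
            (𝓝 (0 * f a + (1 - 0) * f s)) :=
          ((continuous_id.mul continuous_const).add
            ((continuous_const.sub continuous_id).mul continuous_const)).tendsto 0
        simpa using this.mono_left nhdsWithin_le_nhds
      refine le_of_tendsto htend ?_
      filter_upwards [Ioo_mem_nhdsGT_of_mem (Set.left_mem_Ico.mpr one_pos)] with t ht
      exact (key t ht).le
    refine ⟨-((InnerProductSpace.toDual ℝ E).symm f), ?_, ?_⟩
    · intro h
      have : ((InnerProductSpace.toDual ℝ E).symm f) = 0 := by
        simpa [neg_eq_zero] using h
      have hfa0 : f a = 0 := by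
        rw [← InnerProductSpace.toDual_symm_apply, this, inner_zero_left]
      linarith
    · intro s hs
      rw [inner_neg_left, InnerProductSpace.toDual_symm_apply]
      linarith [hfC s hs]
  · have hspan : affineSpan ℝ C ≠ ⊤ := by
      intro h
      exact hint (hC.interior_nonempty_iff_affineSpan_eq_top.mpr h)
    by_cases h0A : (0:E) ∈ affineSpan ℝ C
    · have hdir : (affineSpan ℝ C).direction ≠ ⊤ := by
        intro h
        exact hspan ((AffineSubspace.direction_eq_top_iff_of_nonempty ⟨0, h0A⟩).mp h)
      have hbot : ((affineSpan ℝ C).direction)ᗮ ≠ ⊥ := by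
        simp only [ne_eq, Submodule.orthogonal_eq_bot_iff]
        exact hdir
      obtain ⟨w, hwmem, hw0⟩ := Submodule.exists_mem_ne_zero_of_ne_bot hbot
      refine ⟨w, hw0, fun s hs => ?_⟩
      have hsdir : s - 0 ∈ (affineSpan ℝ C).direction :=
        AffineSubspace.vsub_mem_direction (subset_affineSpan ℝ C hs) h0A
      rw [sub_zero] at hsdir
      rw [real_inner_comm, hwmem s hsdir]
    · obtain ⟨p, hp⟩ := hne
      set V := (affineSpan ℝ C).direction
      set w := p - (V.orthogonalProjection p : E) with hw
      have hwmem : w ∈ Vᗮ := Submodule.sub_starProjection_mem_orthogonal p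
      have hw0 : w ≠ 0 := by
        intro h
        apply h0A
        have hpV : p ∈ V := by
          have : p = (V.orthogonalProjection p : E) := by
            have := sub_eq_zero.mp h
            simpa using this
          rw [this]; exact (V.orthogonalProjection p).2
        have := AffineSubspace.vsub_right_mem_direction_iff_mem (subset_affineSpan ℝ C hp) (0:E)
        rw [← this]
        simpa using V.neg_mem hpV
      refine ⟨w, hw0, fun s hs => ?_⟩
      have hsp : s - p ∈ V := AffineSubspace.vsub_mem_direction
        (subset_affineSpan ℝ C hs) (subset_affineSpan ℝ C hp)
      have h1 : ⟪w, s - p⟫ = 0 := by rw [real_inner_comm]; exact hwmem (s - p) hsp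
      have h2 : ⟪w, (V.orthogonalProjection p : E)⟫ = 0 := by rw [real_inner_comm]; exact hwmem _ (V.orthogonalProjection p).2
      have : ⟪w, s⟫ = ⟪w, w⟫ := by
        have hdecomp : s = w + (V.orthogonalProjection p : E) + (s - p) := by rw [hw]; abel
        rw [hdecomp, inner_add_right, inner_add_right, h1, h2, add_zero, add_zero]
      rw [this]
      exact real_inner_self_nonneg

lemma aux_smul_strict {c : ℝ} (hc : 0 < c) {f : E → ℝ} (hf : StrictConvexOn ℝ Set.univ f) :
    StrictConvexOn ℝ Set.univ (fun u => c * f u) := by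
  refine ⟨convex_univ, fun x _ y _ hxy a b ha hb hab => ?_⟩
  have h := hf.2 (Set.mem_univ x) (Set.mem_univ y) hxy ha hb hab
  simp only [smul_eq_mul] at h ⊢
  nlinarith [h]

lemma aux_sum_convex {n : ℕ} (c : Fin n → ℝ) (hc : ∀ i, 0 ≤ c i) (f : Fin n → E → ℝ)
    (hf : ∀ i, ConvexOn ℝ Set.univ (f i)) :
    ConvexOn ℝ Set.univ (fun u => ∑ i, c i * f i u) := by
  induction n with
  | zero => simpa using convexOn_const (0:ℝ) convex_univ
  | succ m ih =>
    have h := ((hf 0).smul (hc 0)).add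
      (ih (fun i => c i.succ) (fun i => hc _) (fun i => f i.succ) (fun i => hf _))
    have heq : (fun u => ∑ i, c i * f i u) =
        ((fun x => c 0 • f 0 x) + fun u => ∑ i : Fin m, c i.succ * f i.succ u) := by
      funext u
      simp [Fin.sum_univ_succ, smul_eq_mul]
    rw [heq]
    exact h

lemma aux_sum_strict {n : ℕ} (hn : 0 < n) (c : Fin n → ℝ) (hc : ∀ i, 0 < c i) (f : Fin n → E → ℝ)
    (hf : ∀ i, StrictConvexOn ℝ Set.univ (f i)) :
    StrictConvexOn ℝ Set.univ (fun u => ∑ i, c i * f i u) := by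
  cases n with
  | zero => omega
  | succ m =>
    have h := (aux_smul_strict (hc 0) (hf 0)).add_convexOn
      (aux_sum_convex (fun i => c i.succ) (fun i => (hc _).le) (fun i => f i.succ)
        (fun i => (hf _).convexOn))
    have heq : (fun u => ∑ i, c i * f i u) =
        ((fun x => c 0 * f 0 x) + fun u => ∑ i : Fin m, c i.succ * f i.succ u) := by
      funext u
      simp [Fin.sum_univ_succ]
    rw [heq]
    exact h

end AuxLemmas

/-- Let `ℓ : ℝ^d × ℝ^d → [0, ∞)` (`d ≥ 1`) be differentiable and strictly
convex in its first argument with `ℓ(y, y) = 0` for all `y`.  Then for every `r > 0` there exist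
finitely many points `y₁, …, yₙ` on the sphere `‖yᵢ‖₂ = r` and weights `cᵢ > 0` with `Σᵢ cᵢ = 1`
such that `Σᵢ cᵢ ∇₁ℓ(0, yᵢ) = 0`; consequently the strictly convex function
`h(u) := Σᵢ cᵢ ℓ(u, yᵢ)` attains its unique global minimum over `ℝ^d` at `u = 0`. -/
theorem statement15 {d : ℕ} (hd : 0 < d)
    (ℓ : EuclideanSpace ℝ (Fin d) → EuclideanSpace ℝ (Fin d) → ℝ)
    (hℓnonneg : ∀ u y, 0 ≤ ℓ u y)
    (hℓdiff : ∀ y, Differentiable ℝ fun u => ℓ u y)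
    (hℓconv : ∀ y, StrictConvexOn ℝ Set.univ fun u => ℓ u y)
    (hℓdiag : ∀ y, ℓ y y = 0) :
    ∀ r : ℝ, 0 < r →
      ∃ (n : ℕ) (_ : 0 < n) (y : Fin n → EuclideanSpace ℝ (Fin d)) (c : Fin n → ℝ),
        (∀ i, ‖y i‖ = r) ∧ (∀ i, 0 < c i) ∧ (∑ i, c i = 1) ∧
        (∑ i, c i • gradient (fun u => ℓ u (y i)) 0 = 0) ∧
        StrictConvexOn ℝ Set.univ (fun u => ∑ i, c i * ℓ u (y i)) ∧
        ∀ u : EuclideanSpace ℝ (Fin d), u ≠ 0 →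
          (∑ i, c i * ℓ 0 (y i)) < ∑ i, c i * ℓ u (y i) := by
  intro r hr
  classical
  set v : EuclideanSpace ℝ (Fin d) → EuclideanSpace ℝ (Fin d) :=
    fun y => gradient (fun u => ℓ u y) 0 with hv
  -- strict inequality ⟪v y, y⟫ < 0 for y ≠ 0
  have key : ∀ y : EuclideanSpace ℝ (Fin d), y ≠ 0 → ⟪v y, y⟫ < 0 := by
    intro y hy
    have hgrad := aux_grad_ineq (hℓconv y).convexOn (hℓdiff y) 0 ((1/2 : ℝ) • y)
    rw [sub_zero] at hgrad
    have hstrict := (hℓconv y).2 (Set.mem_univ 0) (Set.mem_univ y) (Ne.symm hy)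
      (by norm_num : (0:ℝ) < 1/2) (by norm_num : (0:ℝ) < 1/2) (by norm_num)
    simp only [smul_zero, zero_add, smul_eq_mul, hℓdiag y] at hstrict
    rw [real_inner_smul_right] at hgrad
    have hnn := hℓnonneg 0 y
    nlinarith [hgrad, hstrict, hnn]
  -- the image of the sphere under v
  set S : Set (EuclideanSpace ℝ (Fin d)) := v '' {y | ‖y‖ = r} with hS
  have hSne : S.Nonempty := by
    refine ⟨v (r • EuclideanSpace.single ⟨0, hd⟩ (1:ℝ)), ⟨_, ?_, rfl⟩⟩
    simp [norm_smul, EuclideanSpace.norm_single, abs_of_pos hr]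
  have hmem : (0 : EuclideanSpace ℝ (Fin d)) ∈ convexHull ℝ S := by
    by_contra h0
    obtain ⟨w, hw0, hwsep⟩ := aux_sep (convex_convexHull ℝ S)
      (hSne.mono (subset_convexHull ℝ S)) h0
    have hwn : (0:ℝ) < ‖w‖ := norm_pos_iff.mpr hw0
    have hywnorm : ‖(r / ‖w‖) • w‖ = r := by
      rw [norm_smul, Real.norm_eq_abs, abs_of_pos (div_pos hr hwn)]
      field_simp
    have hyw0 : (r / ‖w‖) • w ≠ 0 := by
      intro h
      rw [h, norm_zero] at hywnorm
      exact hr.ne hywnorm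
    have h1 : ⟪v ((r / ‖w‖) • w), (r / ‖w‖) • w⟫ < 0 := key _ hyw0
    have h2 : 0 ≤ ⟪w, v ((r / ‖w‖) • w)⟫ :=
      hwsep _ (subset_convexHull ℝ S ⟨_, hywnorm, rfl⟩)
    rw [real_inner_smul_right, real_inner_comm] at h1
    nlinarith [div_pos hr hwn]
  rw [convexHull_eq] at hmem
  obtain ⟨ι, t, wt, z, hwt0, hwt1, hzS, hcm⟩ := hmem
  set t' : Finset ι := t.filter (fun i => 0 < wt i) with ht'
  have hsub : t' ⊆ t := Finset.filter_subset _ _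
  have hsum1 : ∑ i ∈ t', wt i = 1 := by
    rw [ht', Finset.sum_filter_of_ne]
    · exact hwt1
    · intro x hx hne
      exact lt_of_le_of_ne (hwt0 x hx) (Ne.symm hne)
  have hsum0 : ∑ i ∈ t', wt i • z i = 0 := by
    have hcm' : ∑ i ∈ t, wt i • z i = 0 := by
      have : t.centerMass wt z = (∑ i ∈ t, wt i)⁻¹ • ∑ i ∈ t, wt i • z i := rfl
      rw [hcm] at this
      rw [hwt1, inv_one, one_smul] at this
      exact this.symm
    rw [ht', Finset.sum_filter_of_ne]
    · exact hcm'
    · intro x hx hne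
      rcases lt_of_le_of_ne (hwt0 x hx) (fun h => hne (by rw [← h, zero_smul])) with h
      exact h
  have ht'ne : t'.Nonempty := Finset.nonempty_of_sum_ne_zero (hsum1 ▸ one_ne_zero)
  have hnpos : 0 < Fintype.card {x // x ∈ t'} := by
    rw [Fintype.card_coe]
    exact Finset.card_pos.mpr ht'ne
  set n := Fintype.card {x // x ∈ t'} with hn
  set e : Fin n ≃ {x // x ∈ t'} := (Fintype.equivFin {x // x ∈ t'}).symm with he
  -- choose sphere preimages
  have hzsphere : ∀ j : {x // x ∈ t'}, ∃ yy : EuclideanSpace ℝ (Fin d), ‖yy‖ = r ∧ v yy = z ↑j := by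
    intro j
    obtain ⟨yy, hyy, hvy⟩ := hzS ↑j (hsub j.2)
    exact ⟨yy, hyy, hvy⟩
  choose Y hYnorm hYv using hzsphere
  refine ⟨n, hnpos, fun k => Y (e k), fun k => wt ↑(e k), ?_, ?_, ?_, ?_, ?_, ?_⟩
  · intro i; exact hYnorm (e i)
  · intro i
    exact (Finset.mem_filter.mp (e i).2).2
  · rw [Fintype.sum_equiv e _ (fun j : {x // x ∈ t'} => wt ↑j) (fun _ => rfl),
      Finset.sum_coe_sort t' wt]
    exact hsum1
  · have : ∀ k : Fin n, (wt ↑(e k)) • gradient (fun u => ℓ u (Y (e k))) 0 = wt ↑(e k) • z ↑(e k) := by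
      intro k
      rw [show gradient (fun u => ℓ u (Y (e k))) 0 = v (Y (e k)) from rfl, hYv]
    rw [Finset.sum_congr rfl (fun k _ => this k),
      Fintype.sum_equiv e _ (fun j : {x // x ∈ t'} => wt ↑j • z ↑j) (fun _ => rfl),
      Finset.sum_coe_sort t' (fun j => wt j • z j)]
    exact hsum0
  · refine aux_sum_strict hnpos _ ?_ (fun k u => ℓ u (Y (e k))) (fun k => hℓconv _)
    intro i
    exact (Finset.mem_filter.mp (e i).2).2
  · -- global minimality
    intro u hu
    set c : Fin n → ℝ := fun k => wt ↑(e k) with hc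
    set yy : Fin n → EuclideanSpace ℝ (Fin d) := fun k => Y (e k) with hyy
    have hcpos : ∀ k, 0 < c k := by
      intro k
      exact (Finset.mem_filter.mp (e k).2).2
    have hgradsum : ∑ k, c k • v (yy k) = 0 := by
      have : ∀ k : Fin n, c k • v (yy k) = wt ↑(e k) • z ↑(e k) := by
        intro k; rw [hc, hyy]; simp only; rw [hYv]
      rw [Finset.sum_congr rfl (fun k _ => this k),
        Fintype.sum_equiv e _ (fun j : {x // x ∈ t'} => wt ↑j • z ↑j) (fun _ => rfl),
        Finset.sum_coe_sort t' (fun j => wt j • z j)]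
      exact hsum0
    have hmin : ∀ x : EuclideanSpace ℝ (Fin d),
        ∑ k, c k * ℓ 0 (yy k) ≤ ∑ k, c k * ℓ x (yy k) := by
      intro x
      have hper : ∀ k, c k * ⟪v (yy k), x⟫ ≤ c k * (ℓ x (yy k) - ℓ 0 (yy k)) := by
        intro k
        have := aux_grad_ineq (hℓconv (yy k)).convexOn (hℓdiff (yy k)) 0 x
        rw [sub_zero] at this
        exact mul_le_mul_of_nonneg_left this (hcpos k).le
      have hsuminner : ∑ k, c k * ⟪v (yy k), x⟫ = 0 := by
        have : ∑ k, c k * ⟪v (yy k), x⟫ = ⟪∑ k, c k • v (yy k), x⟫ := by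
          rw [sum_inner]
          congr 1
          funext k
          rw [real_inner_smul_left]
        rw [this, hgradsum, inner_zero_left]
      have hsum := Finset.sum_le_sum (s := Finset.univ) (fun k _ => hper k)
      rw [hsuminner] at hsum
      have hexpand : ∑ k, c k * (ℓ x (yy k) - ℓ 0 (yy k)) =
          ∑ k, c k * ℓ x (yy k) - ∑ k, c k * ℓ 0 (yy k) := by
        rw [← Finset.sum_sub_distrib]
        congr 1; funext k; ring
      rw [hexpand] at hsum
      linarith
    have hstrictconv := aux_sum_strict hnpos c hcpos (fun k x => ℓ x (yy k))
      (fun k => hℓconv _)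
    have hmid := hstrictconv.2 (Set.mem_univ 0) (Set.mem_univ u) (Ne.symm hu)
      (by norm_num : (0:ℝ) < 1/2) (by norm_num : (0:ℝ) < 1/2) (by norm_num)
    simp only [smul_zero, zero_add, smul_eq_mul] at hmid
    have hmid2 := hmin ((1/2 : ℝ) • u)
    linarith [hmid, hmid2]
end
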